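/- Let p be an odd prime. The set A = {x + 2p·(x² mod p) : x = 0, 1, …, p−1} is a Sidon set of integers: if a₁ + a₂ = a₃ + a₄ with a₁, a₂, a₃, a₄ ∈ A, then {a₁, a₂} = {a₃, a₄}. -/
import Mathlib

theorem stmt_6 (p : ℕ) (hp : p.Prime) (hodd : Odd p)
    (A : Set ℤ)
    (hA : A = {a | ∃ x : ℕ, x < p ∧ a = (x : ℤ) + 2 * p * ((x ^ 2 : ℕ) % p : ℕ)}) :
    ∀ a₁ ∈ A, ∀ a₂ ∈ A, ∀ a₃ ∈ A, ∀ a₄ ∈ A,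
      a₁ + a₂ = a₃ + a₄ → (a₁ = a₃ ∧ a₂ = a₄) ∨ (a₁ = a₄ ∧ a₂ = a₃) := by
  subst hA
  have hppos : 0 < p := hp.pos
  have hp2 : p ≠ 2 := by
    rintro rfl; simp [Nat.odd_iff] at hodd
  -- p ∣ x^2 - (x^2 % p) over ℤ
  have hS : ∀ x : ℕ, (p:ℤ) ∣ (x:ℤ)^2 - ((x^2 % p : ℕ) : ℤ) := by
    intro x
    refine ⟨((x^2 / p : ℕ) : ℤ), ?_⟩
    have h := Nat.div_add_mod (x^2) p
    zify at h
    push_cast at h ⊢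
    linarith
  intro a₁ h₁ a₂ h₂ a₃ h₃ a₄ h₄ hsum
  obtain ⟨x₁, hx₁, rfl⟩ := h₁
  obtain ⟨x₂, hx₂, rfl⟩ := h₂
  obtain ⟨x₃, hx₃, rfl⟩ := h₃
  obtain ⟨x₄, hx₄, rfl⟩ := h₄
  set S₁ : ℤ := ((x₁^2 % p : ℕ) : ℤ) with hS₁
  set S₂ : ℤ := ((x₂^2 % p : ℕ) : ℤ) with hS₂
  set S₃ : ℤ := ((x₃^2 % p : ℕ) : ℤ) with hS₃
  set S₄ : ℤ := ((x₄^2 % p : ℕ) : ℤ) with hS₄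
  have hSb : ∀ x : ℕ, ((x^2 % p : ℕ) : ℤ) < p := by
    intro x; exact_mod_cast Nat.mod_lt _ hppos
  have hSb₁ := hSb x₁; have hSb₂ := hSb x₂; have hSb₃ := hSb x₃; have hSb₄ := hSb x₄
  have hSnn : ∀ x : ℕ, (0:ℤ) ≤ ((x^2 % p : ℕ) : ℤ) := fun x => Int.natCast_nonneg _
  have hSn₁ := hSnn x₁; have hSn₂ := hSnn x₂; have hSn₃ := hSnn x₃; have hSn₄ := hSnn x₄
  have hxb₁ : (x₁:ℤ) < p := by exact_mod_cast hx₁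
  have hxb₂ : (x₂:ℤ) < p := by exact_mod_cast hx₂
  have hxb₃ : (x₃:ℤ) < p := by exact_mod_cast hx₃
  have hxb₄ : (x₄:ℤ) < p := by exact_mod_cast hx₄
  have hxn₁ : (0:ℤ) ≤ x₁ := Int.natCast_nonneg _
  have hxn₂ : (0:ℤ) ≤ x₂ := Int.natCast_nonneg _
  have hxn₃ : (0:ℤ) ≤ x₃ := Int.natCast_nonneg _
  have hxn₄ : (0:ℤ) ≤ x₄ := Int.natCast_nonneg _
  have hppz : (0:ℤ) < p := by exact_mod_cast hppos
  -- Step 1: split the sum equation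
  set D : ℤ := (S₃ + S₄) - (S₁ + S₂) with hD
  have heq : (x₁:ℤ) + x₂ - x₃ - x₄ = 2 * p * D := by
    simp only [hD]; linarith [hsum]
  have hD0 : D = 0 := by
    have h1 : (2*(p:ℤ)) * (-1) < (2*p) * D := by nlinarith
    have h2 : (2*(p:ℤ)) * D < (2*p) * 1 := by nlinarith
    have h1' : (-1:ℤ) < D := lt_of_mul_lt_mul_left h1 (by positivity)
    have h2' : D < 1 := lt_of_mul_lt_mul_left h2 (by positivity)
    omega
  have hxsum : (x₁:ℤ) + x₂ = x₃ + x₄ := by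
    have := heq; rw [hD0] at this; linarith
  have hSsum : S₁ + S₂ = S₃ + S₄ := by
    simp only [hD] at hD0; linarith
  -- Step 2: mod p info
  obtain ⟨k₁, hk₁⟩ := hS x₁
  obtain ⟨k₂, hk₂⟩ := hS x₂
  obtain ⟨k₃, hk₃⟩ := hS x₃
  obtain ⟨k₄, hk₄⟩ := hS x₄
  rw [← hS₁] at hk₁; rw [← hS₂] at hk₂; rw [← hS₃] at hk₃; rw [← hS₄] at hk₄
  have hdvd : (p:ℤ) ∣ (2*((x₁:ℤ) - x₃)) * (2*((x₁:ℤ) - x₄)) := by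
    refine ⟨2*(k₁ + k₂ - k₃ - k₄), ?_⟩
    linear_combination 2*hk₁ + 2*hk₂ - 2*hk₃ - 2*hk₄ + 2*hSsum
      + (2*(x₁:ℤ) - 2*x₂ - 2*x₃ - 2*x₄) * hxsum
  have hpz : Prime ((p:ℤ)) := Nat.prime_iff_prime_int.mp hp
  have hnd2 : ¬ ((p:ℤ) ∣ 2) := by
    intro h
    have : p ∣ 2 := by exact_mod_cast h
    have h1 := Nat.le_of_dvd (by norm_num) this
    have h2 := hp.two_le
    omega
  have key : (p:ℤ) ∣ ((x₁:ℤ) - x₃) ∨ (p:ℤ) ∣ ((x₁:ℤ) - x₄) := by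
    rcases hpz.dvd_mul.mp hdvd with h | h
    · left
      rcases hpz.dvd_mul.mp h with h' | h'
      · exact absurd h' hnd2
      · exact h'
    · right
      rcases hpz.dvd_mul.mp h with h' | h'
      · exact absurd h' hnd2
      · exact h'
  rcases key with h | h
  · have : (x₁:ℤ) - x₃ = 0 := Int.eq_zero_of_abs_lt_dvd h (by rw [abs_lt]; omega)
    have e13 : x₁ = x₃ := by omega
    have e24 : x₂ = x₄ := by omega
    subst e13; subst e24
    exact Or.inl ⟨rfl, rfl⟩
  · have : (x₁:ℤ) - x₄ = 0 := Int.eq_zero_of_abs_lt_dvd h (by rw [abs_lt]; omega)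
    have e14 : x₁ = x₄ := by omega
    have e23 : x₂ = x₃ := by omega
    subst e14; subst e23
    exact Or.inr ⟨rfl, rfl⟩
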